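/- Let X be a real Hilbert space and let A, B be bodies in X (closed convex sets with nonempty interior) with A ∩ B ≠ ∅. If A is an LUR body (every point of ∂A is an LUR point of A), then the couple (A, B) is stable. -/

import Mathlib

open Filter Metric Topology

/-- Attouch–Wets convergence of a sequence of sets:
for every `N`, `sup_{‖x‖ ≤ N} |dist(x, Aₙ) − dist(x, L)| → 0`. -/
def AWTendsto {X : Type*} [NormedAddCommGroup X] (A : ℕ → Set X) (L : Set X) : Prop :=
  ∀ N : ℕ, ∀ ε : ℝ, 0 < ε → ∃ n₀ : ℕ, ∀ n ≥ n₀, ∀ x : X, ‖x‖ ≤ (N : ℝ) →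
    |Metric.infDist x (A n) - Metric.infDist x L| < ε

/-- `p` is a metric projection (nearest point) of `x` onto `K`. -/
def IsProjOn {X : Type*} [NormedAddCommGroup X] (K : Set X) (x p : X) : Prop :=
  p ∈ K ∧ ∀ y ∈ K, dist x p ≤ dist x y

/-- `a`, `b` are the perturbed alternating projections sequences w.r.t. `A`, `B`
with starting point `a₀`: `bₙ = P_{Bₙ}(a_{n−1})` and `aₙ = P_{Aₙ}(bₙ)` for `n ≥ 1`. -/
def IsPerturbedAPS {X : Type*} [NormedAddCommGroup X]
    (A B : ℕ → Set X) (a₀ : X) (a b : ℕ → X) : Prop :=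
  a 0 = a₀ ∧ ∀ n : ℕ,
    IsProjOn (B (n + 1)) (a n) (b (n + 1)) ∧ IsProjOn (A (n + 1)) (b (n + 1)) (a (n + 1))

/-- `x` is an LUR (locally uniformly rotund) point of the body `A`:
for each `ε > 0` there is `δ > 0` such that `y ∈ A` and
`dist((x+y)/2, ∂A) < δ` imply `‖x − y‖ < ε`. -/
def IsLURPoint {X : Type*} [NormedAddCommGroup X] [NormedSpace ℝ X]
    (A : Set X) (x : X) : Prop :=
  ∀ ε : ℝ, 0 < ε → ∃ δ : ℝ, 0 < δ ∧ ∀ y ∈ A,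
    Metric.infDist ((2 : ℝ)⁻¹ • (x + y)) (frontier A) < δ → ‖x - y‖ < ε

/-- The couple `(A, B)` is stable: for every sequences of nonempty closed convex sets
Attouch–Wets converging to `A` and `B` respectively, and every starting point, the
corresponding perturbed alternating projections sequences converge in norm. -/
def StablePair {X : Type*} [NormedAddCommGroup X] [NormedSpace ℝ X] (A B : Set X) : Prop :=
  ∀ An Bn : ℕ → Set X,
    (∀ n, (An n).Nonempty ∧ IsClosed (An n) ∧ Convex ℝ (An n)) →
    (∀ n, (Bn n).Nonempty ∧ IsClosed (Bn n) ∧ Convex ℝ (Bn n)) →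
    AWTendsto An A → AWTendsto Bn B →
    ∀ a₀ : X, ∀ a b : ℕ → X, IsPerturbedAPS An Bn a₀ a b →
      (∃ la : X, Filter.Tendsto a Filter.atTop (nhds la)) ∧
      (∃ lb : X, Filter.Tendsto b Filter.atTop (nhds lb))

section Aux
variable {X : Type*} [NormedAddCommGroup X] [InnerProductSpace ℝ X]

local notation "⟪" x ", " y "⟫" => @inner ℝ _ _ x y

private lemma le_of_sq_le' {a b : ℝ} (ha : 0 ≤ a) (hb : 0 ≤ b) (h : a^2 ≤ b^2) : a ≤ b := by
  nlinarith

private lemma IsProjOn.norm_le' {K : Set X} {x p : X} (h : IsProjOn K x p) {y : X}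
    (hy : y ∈ K) : ‖x - p‖ ≤ ‖x - y‖ := by
  have := h.2 y hy
  rwa [dist_eq_norm, dist_eq_norm] at this

private lemma IsProjOn.inner_nonpos {K : Set X} (hK : Convex ℝ K) {x p : X}
    (h : IsProjOn K x p) {y : X} (hy : y ∈ K) : ⟪x - p, y - p⟫ ≤ 0 := by
  by_contra hpos
  push_neg at hpos
  set I : ℝ := ⟪x - p, y - p⟫ with hI
  set n : ℝ := ‖y - p‖^2 with hn
  have hn0 : 0 ≤ n := sq_nonneg _
  have key : ∀ t : ℝ, 0 < t → t ≤ 1 → I ≤ t * n / 2 := by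
    intro t ht ht1
    have hmem : p + t • (y - p) ∈ K := by
      have h2 : (1 - t) • p + t • y ∈ K := hK h.1 hy (by linarith) (le_of_lt ht) (by ring)
      have he : p + t • (y - p) = (1 - t) • p + t • y := by
        rw [smul_sub, sub_smul, one_smul]; abel
      rwa [he]
    have h1 : ‖x - p‖ ≤ ‖x - (p + t • (y - p))‖ := h.norm_le' hmem
    have h2 : ‖x - (p + t • (y - p))‖^2 = ‖x - p‖^2 - 2*(t*I) + t^2*n := by
      have e : x - (p + t • (y - p)) = (x - p) - t • (y - p) := by abel
      rw [e, norm_sub_sq_real, real_inner_smul_right, norm_smul, Real.norm_eq_abs,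
        abs_of_pos ht]
      rw [hI, hn]
      ring
    have h3 : ‖x - p‖^2 ≤ ‖x - (p + t • (y - p))‖^2 :=
      pow_le_pow_left₀ (norm_nonneg _) h1 2
    nlinarith
  have hden : (0:ℝ) < n + 1 := by linarith
  set t : ℝ := min 1 (I/(n+1)) with htdef
  have ht : 0 < t := lt_min one_pos (div_pos hpos hden)
  have h4 := key t ht (min_le_left _ _)
  have h5 : t * n ≤ (I/(n+1)) * n := mul_le_mul_of_nonneg_right (min_le_right _ _) hn0
  have h6 : (I/(n+1)) * n < I := by
    rw [div_mul_eq_mul_div, div_lt_iff₀ hden]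
    nlinarith
  linarith

private lemma IsProjOn.sq_dist_le {K : Set X} (hK : Convex ℝ K) {x p : X}
    (h : IsProjOn K x p) {q : X} (hq : q ∈ K) :
    ‖p - q‖^2 + ‖x - p‖^2 ≤ ‖x - q‖^2 := by
  have hi := h.inner_nonpos hK hq
  have e : x - q = (x - p) - (q - p) := by abel
  have h2 : ‖x - q‖^2 = ‖x - p‖^2 - 2*⟪x - p, q - p⟫ + ‖q - p‖^2 := by
    rw [e, norm_sub_sq_real]
  have h3 : ‖q - p‖ = ‖p - q‖ := norm_sub_rev _ _
  rw [← h3]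
  nlinarith

private lemma IsProjOn.sq_dist_ball {K : Set X} (hK : Convex ℝ K) {x p : X}
    (h : IsProjOn K x p) {w : X} {ρ : ℝ} (hρ : 0 ≤ ρ)
    (hsub : Metric.closedBall w ρ ⊆ K) :
    ‖p - w‖^2 + ‖x - p‖^2 + 2*ρ*‖x - p‖ ≤ ‖x - w‖^2 := by
  rcases eq_or_ne x p with rfl | hne
  · simp
  · set d : ℝ := ‖x - p‖ with hd
    have hd0 : 0 < d := by
      rw [hd, norm_pos_iff, sub_ne_zero]; exact hne
    set z : X := w + (ρ/d) • (x - p) with hz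
    have hzK : z ∈ K := by
      apply hsub
      rw [Metric.mem_closedBall, dist_eq_norm]
      have e : z - w = (ρ/d) • (x - p) := by rw [hz]; abel
      rw [e, norm_smul, Real.norm_eq_abs, abs_of_nonneg (by positivity)]
      rw [← hd]
      field_simp; exact le_rfl
    have hi := h.inner_nonpos hK hzK
    have e2 : z - p = (w - p) + (ρ/d) • (x - p) := by rw [hz]; abel
    rw [e2, inner_add_right, real_inner_smul_right, real_inner_self_eq_norm_sq, ← hd] at hi
    have e3 : (ρ/d) * d^2 = ρ * d := by field_simp
    rw [e3] at hi
    have e4 : x - w = (x - p) - (w - p) := by abel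
    have h2 : ‖x - w‖^2 = ‖x - p‖^2 - 2*⟪x - p, w - p⟫ + ‖w - p‖^2 := by
      rw [e4, norm_sub_sq_real]
    have h4 : ‖w - p‖ = ‖p - w‖ := norm_sub_rev _ _
    rw [← h4]
    nlinarith

private lemma AWTendsto.spec {An : ℕ → Set X} {L : Set X} (h : AWTendsto An L)
    (R ε : ℝ) (hε : 0 < ε) :
    ∃ n₀, ∀ n ≥ n₀, ∀ x : X, ‖x‖ ≤ R →
      |Metric.infDist x (An n) - Metric.infDist x L| < ε := by
  obtain ⟨n₀, hn⟩ := h ⌈R⌉₊ ε hε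
  exact ⟨n₀, fun n hn' x hx => hn n hn' x (hx.trans (Nat.le_ceil R))⟩

private lemma aw_closedBall_subset [CompleteSpace X] {An : ℕ → Set X} {A : Set X}
    (h : AWTendsto An A)
    (hprop : ∀ n, (An n).Nonempty ∧ IsClosed (An n) ∧ Convex ℝ (An n))
    {w : X} {ρ : ℝ} (hρ : 0 < ρ) (hsub : Metric.closedBall w (2*ρ) ⊆ A) :
    ∃ N, ∀ n ≥ N, Metric.closedBall w ρ ⊆ An n := by
  obtain ⟨N, hN⟩ := h.spec (‖w‖ + 2*ρ) (ρ/2) (by positivity)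
  refine ⟨N, fun n hn x hx => ?_⟩
  by_contra hxn
  obtain ⟨p, hpmem, hp⟩ := exists_norm_eq_iInf_of_complete_convex (hprop n).1
    ((hprop n).2.1.isComplete) (hprop n).2.2 x
  have hvar : ∀ q ∈ An n, ⟪x - p, q - p⟫ ≤ 0 :=
    (norm_eq_iInf_iff_real_inner_le_zero (hprop n).2.2 hpmem).mp hp
  set d : ℝ := ‖x - p‖ with hd
  have hd0 : 0 < d := by
    rw [hd, norm_pos_iff, sub_ne_zero]
    intro he
    exact hxn (he ▸ hpmem)
  set y : X := w + (2*ρ/d) • (x - p) with hy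
  have hyw : ‖y - w‖ = 2*ρ := by
    have e : y - w = (2*ρ/d) • (x - p) := by rw [hy]; abel
    rw [e, norm_smul, Real.norm_eq_abs, abs_of_nonneg (by positivity), ← hd]
    field_simp
  have hy_mem_A : y ∈ A := hsub (by rw [Metric.mem_closedBall, dist_eq_norm, hyw])
  have hy_norm : ‖y‖ ≤ ‖w‖ + 2*ρ := by
    calc ‖y‖ = ‖w + (y - w)‖ := by congr 1; abel
    _ ≤ ‖w‖ + ‖y - w‖ := norm_add_le _ _
    _ = ‖w‖ + 2*ρ := by rw [hyw]
  have h1 : Metric.infDist y (An n) < ρ := by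
    have h2 := hN n hn y hy_norm
    rw [Metric.infDist_zero_of_mem hy_mem_A, sub_zero] at h2
    have := (abs_lt.mp h2).2
    linarith
  obtain ⟨q, hq, hqd⟩ := (Metric.infDist_lt_iff (hprop n).1).mp h1
  have hvq := hvar q hq
  have e5 : q - p = (q - y) + (2*ρ/d) • (x - p) + (w - x) + (x - p) := by
    rw [hy]; abel
  rw [e5, inner_add_right, inner_add_right, inner_add_right, real_inner_smul_right,
    real_inner_self_eq_norm_sq, ← hd] at hvq
  have e6 : 2*ρ/d * d^2 = 2*ρ*d := by field_simp
  rw [e6] at hvq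
  have b1 : -(d*ρ) < ⟪x - p, q - y⟫ := by
    have habs := abs_real_inner_le_norm (x - p) (q - y)
    have h7 : ‖q - y‖ < ρ := by
      have : dist y q < ρ := hqd
      rw [dist_eq_norm] at this
      calc ‖q - y‖ = ‖y - q‖ := norm_sub_rev _ _
      _ < ρ := this
    have h8 := (abs_le.mp habs).1
    have h9 : ‖x - p‖ * ‖q - y‖ < d * ρ := by
      rw [← hd]
      rcases eq_or_lt_of_le (norm_nonneg (q - y)) with he | hlt
      · rw [← he]; simp; positivity
      · exact mul_lt_mul' le_rfl h7 (le_of_lt hlt) hd0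
    linarith
  have b2 : -(d*ρ) ≤ ⟪x - p, w - x⟫ := by
    have habs := abs_real_inner_le_norm (x - p) (w - x)
    have h7 : ‖w - x‖ ≤ ρ := by
      rw [Metric.mem_closedBall, dist_eq_norm] at hx
      calc ‖w - x‖ = ‖x - w‖ := norm_sub_rev _ _
      _ ≤ ρ := hx
    have h8 := (abs_le.mp habs).1
    have h9 : ‖x - p‖ * ‖w - x‖ ≤ d * ρ := by
      rw [← hd]
      exact mul_le_mul le_rfl h7 (norm_nonneg _) (le_of_lt hd0)
    linarith
  nlinarith

/-- one projection step: distance to a reference point `c` grows by at most `2ζ`,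
where `ζ` bounds the distance from `c` to the set. -/
private lemma step_norm_le {K : Set X} (hK : Convex ℝ K) {x p : X} (h : IsProjOn K x p)
    {q c : X} {ζ : ℝ} (hq : q ∈ K) (hqc : ‖q - c‖ ≤ ζ) :
    ‖p - c‖ ≤ ‖x - c‖ + 2*ζ := by
  have h1 := h.sq_dist_le hK hq
  have h2 : ‖p - q‖ ≤ ‖x - q‖ := by
    apply le_of_sq_le' (norm_nonneg _) (norm_nonneg _)
    nlinarith [sq_nonneg ‖x - p‖]
  have h3 : ‖x - q‖ ≤ ‖x - c‖ + ζ := by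
    calc ‖x - q‖ = ‖(x - c) + (c - q)‖ := by congr 1; abel
    _ ≤ ‖x - c‖ + ‖c - q‖ := norm_add_le _ _
    _ ≤ ‖x - c‖ + ζ := by
        have : ‖c - q‖ = ‖q - c‖ := norm_sub_rev _ _
        linarith
  calc ‖p - c‖ = ‖(p - q) + (q - c)‖ := by congr 1; abel
  _ ≤ ‖p - q‖ + ‖q - c‖ := norm_add_le _ _
  _ ≤ ‖x - c‖ + 2*ζ := by linarith

/-- quantitative Fejér step. -/
private lemma step_sq_le {K : Set X} (hK : Convex ℝ K) {x p : X} (h : IsProjOn K x p)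
    {q c : X} {ζ : ℝ} (hq : q ∈ K) (hqc : ‖q - c‖ ≤ ζ) (hζ : 0 ≤ ζ) :
    ‖p - c‖^2 ≤ ‖x - c‖^2 - ‖x - p‖^2 + ζ*(4*‖x - c‖ + 4*ζ) := by
  have h1 := h.sq_dist_le hK hq
  have h2 : ‖p - q‖ ≤ ‖x - q‖ := by
    apply le_of_sq_le' (norm_nonneg _) (norm_nonneg _)
    nlinarith [sq_nonneg ‖x - p‖]
  have h3 : ‖x - q‖ ≤ ‖x - c‖ + ζ := by
    calc ‖x - q‖ = ‖(x - c) + (c - q)‖ := by congr 1; abel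
    _ ≤ ‖x - c‖ + ‖c - q‖ := norm_add_le _ _
    _ ≤ ‖x - c‖ + ζ := by
        have : ‖c - q‖ = ‖q - c‖ := norm_sub_rev _ _
        linarith
  have h4 : ‖p - c‖ ≤ ‖p - q‖ + ζ := by
    calc ‖p - c‖ = ‖(p - q) + (q - c)‖ := by congr 1; abel
    _ ≤ ‖p - q‖ + ‖q - c‖ := norm_add_le _ _
    _ ≤ ‖p - q‖ + ζ := by linarith
  nlinarith [norm_nonneg (p - q), norm_nonneg (x - c), norm_nonneg (p - c),
    sq_nonneg (‖x - c‖ + ζ)]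

/-- if `A ⊆ {⟪v,·⟫ ≤ α}` with `‖v‖ = 1`, then for `z ∈ A`
the distance to the frontier of `A` is at most `α - ⟪v,z⟫`. -/
private lemma frontier_dist_le {A : Set X} (hAc : IsClosed A) {v : X} (hv : ‖v‖ = 1)
    {α : ℝ} (hA : ∀ x ∈ A, ⟪v, x⟫ ≤ α) {z : X} (hz : z ∈ A) :
    Metric.infDist z (frontier A) ≤ α - ⟪v, z⟫ := by
  by_contra hlt
  push_neg at hlt
  have h0 : 0 ≤ α - ⟪v, z⟫ := by linarith [hA z hz]
  set D : ℝ := Metric.infDist z (frontier A) with hD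
  set t : ℝ := ((α - ⟪v, z⟫) + D)/2 with ht
  have htl : α - ⟪v, z⟫ < t := by rw [ht]; linarith
  have htD : t < D := by rw [ht]; linarith
  have ht0 : 0 ≤ t := by rw [ht]; linarith
  have hinner_t : ∀ s : ℝ, ⟪v, z + s • v⟫ = ⟪v, z⟫ + s := by
    intro s
    rw [inner_add_right, real_inner_smul_right, real_inner_self_eq_norm_sq, hv]
    ring
  by_cases hm : z + t • v ∈ A
  · have := hA _ hm
    rw [hinner_t] at this
    linarith
  · set S : Set ℝ := {s : ℝ | s ∈ Set.Icc 0 t ∧ z + s • v ∈ A} with hS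
    have hS0 : (0:ℝ) ∈ S := by
      constructor
      · exact ⟨le_refl 0, ht0⟩
      · simpa using hz
    have hSbdd : BddAbove S := ⟨t, fun s hs => hs.1.2⟩
    have hSclosed : IsClosed S := by
      have he : S = Set.Icc 0 t ∩ ((fun s : ℝ => z + s • v) ⁻¹' A) := rfl
      rw [he]
      exact IsClosed.inter isClosed_Icc (hAc.preimage (by continuity))
    set T : ℝ := sSup S with hT
    have hTS : T ∈ S := hSclosed.csSup_mem ⟨0, hS0⟩ hSbdd
    have hdist_sv : ∀ s s' : ℝ, dist (z + s • v) (z + s' • v) = |s - s'| := by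
      intro s s'
      rw [dist_eq_norm]
      have e : z + s • v - (z + s' • v) = (s - s') • v := by
        rw [sub_smul]; abel
      rw [e, norm_smul, Real.norm_eq_abs, hv, mul_one]
    have hTfront : z + T • v ∈ frontier A := by
      rw [hAc.frontier_eq]
      refine ⟨hTS.2, ?_⟩
      intro hint
      obtain ⟨ρ₀, hρ₀, hball⟩ := Metric.isOpen_iff.mp isOpen_interior _ hint
      have hTt : T < t := lt_of_le_of_ne hTS.1.2 (fun he => hm (he ▸ hTS.2))
      set s' : ℝ := min t (T + ρ₀/2) with hs'
      have hs'T : T < s' := lt_min hTt (by linarith)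
      have hs'S : s' ∈ S := by
        constructor
        · exact ⟨le_trans hTS.1.1 (le_of_lt hs'T), min_le_left _ _⟩
        · have hmem : z + s' • v ∈ Metric.ball (z + T • v) ρ₀ := by
            rw [Metric.mem_ball, hdist_sv]
            rw [abs_of_pos (by linarith)]
            have : s' ≤ T + ρ₀/2 := min_le_right _ _
            linarith
          exact interior_subset (hball hmem)
      exact absurd (le_csSup hSbdd hs'S) (not_le.mpr hs'T)
    have h5 : Metric.infDist z (frontier A) ≤ dist z (z + T • v) :=
      Metric.infDist_le_dist_of_mem hTfront
    have h6 : dist z (z + T • v) = T := by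
      have e : z - (z + T • v) = (-T) • v := by rw [neg_smul]; abel
      rw [dist_eq_norm, e, norm_smul, Real.norm_eq_abs, hv, mul_one, abs_neg,
        abs_of_nonneg hTS.1.1]
    rw [h6] at h5
    have : T ≤ t := hTS.1.2
    linarith

end Aux

section ND
variable {X : Type*} [NormedAddCommGroup X] [InnerProductSpace ℝ X]
local notation "⟪" x ", " y "⟫" => @inner ℝ _ _ x y

private lemma ntri (p q c : X) : ‖p - c‖ ≤ ‖p - q‖ + ‖q - c‖ := by
  have := dist_triangle p q c
  simpa [dist_eq_norm] using this

private lemma inner_diff_le {v : X} (hv : ‖v‖ = 1) (p q : X) :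
    |⟪v, p⟫ - ⟪v, q⟫| ≤ ‖p - q‖ := by
  rw [← inner_sub_right]
  have := abs_real_inner_le_norm v (p - q)
  rwa [hv, one_mul] at this

private lemma convex_combo_mem {K : Set X} (hK : Convex ℝ K) {p q : X} (hp : p ∈ K)
    (hq : q ∈ K) {μ : ℝ} (h0 : 0 ≤ μ) (h1 : μ ≤ 1) : p + μ • (q - p) ∈ K := by
  have h2 : (1 - μ) • p + μ • q ∈ K := hK hp hq (by linarith) h0 (by ring)
  have e : p + μ • (q - p) = (1 - μ) • p + μ • q := by
    rw [smul_sub, sub_smul, one_smul]; abel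
  rwa [e]

private lemma inner_combo (v p q : X) (μ : ℝ) :
    ⟪v, p + μ • (q - p)⟫ = ⟪v, p⟫ + μ * (⟪v, q⟫ - ⟪v, p⟫) := by
  rw [inner_add_right, real_inner_smul_right, inner_sub_right]

private lemma proj_norm_sub_le {K : Set X} (hK : Convex ℝ K) {x p : X}
    (h : IsProjOn K x p) {q : X} (hq : q ∈ K) : ‖p - q‖ ≤ ‖x - q‖ := by
  have h1 := h.sq_dist_le hK hq
  apply le_of_sq_le' (norm_nonneg _) (norm_nonneg _)
  nlinarith [sq_nonneg ‖x - p‖]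

set_option maxHeartbeats 1000000 in
private lemma nd_core {K₁ K₂ : Set X} (hK₁ : Convex ℝ K₁) (hK₂ : Convex ℝ K₂)
    {A B : Set X} (hAne : A.Nonempty) (hBne : B.Nonempty)
    {v c : X} {α θ : ℝ} (hv : ‖v‖ = 1) (hθ : 0 < θ) (hθ1 : θ ≤ 1)
    (hL : ∀ xx ∈ A, α - θ ≤ ⟪v, xx⟫ → ‖xx - c‖ < 1)
    (hcα : ⟪v, c⟫ = α)
    (hB_ge : ∀ yb ∈ B, α ≤ ⟪v, yb⟫)
    {x y z : X}
    (hproj₁ : IsProjOn K₁ x y) (hproj₂ : IsProjOn K₂ y z)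
    {q₁ q₂ : X} (hq₁ : q₁ ∈ K₁) (hq₂ : q₂ ∈ K₂)
    {Z : ℝ} (hZdef : Z = θ/512)
    (hq₁c : ‖q₁ - c‖ ≤ Z) (hq₂c : ‖q₂ - c‖ ≤ Z)
    (hAWA : ∀ w' ∈ K₂, ‖w' - c‖ ≤ 6 → Metric.infDist w' A < Z)
    (hAWB : ∀ w' ∈ K₁, ‖w' - c‖ ≤ 2 → Metric.infDist w' B < Z)
    (hnd : ‖x - c‖ - 1 ≤ ‖z - c‖)
    (hRR : 1000000/θ^2 ≤ ‖z - c‖) : False := by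
  have hZ0 : 0 < Z := by rw [hZdef]; positivity
  have hZ1 : Z ≤ 1 := by rw [hZdef]; linarith
  have hθ2z : 1000000 ≤ θ^2 * ‖z - c‖ := by
    rw [div_le_iff₀ (by positivity)] at hRR
    linarith only [hRR]
  have hzbig : (1000000:ℝ) ≤ ‖z - c‖ := by
    nlinarith only [hθ2z, norm_nonneg (z - c),
      mul_nonneg (by nlinarith only [hθ.le, hθ1] : (0:ℝ) ≤ 1 - θ^2) (norm_nonneg (z - c))]
  -- basic norms
  have h1 : ‖y - c‖ ≤ ‖x - c‖ + 2*Z := step_norm_le hK₁ hproj₁ hq₁ hq₁c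
  have hyz : ‖y - c‖ ≤ ‖z - c‖ + 1 + 2*Z := by linarith
  -- bound on t = ‖y - z‖
  have hsq := hproj₂.sq_dist_le hK₂ hq₂
  have hyq2 : ‖y - q₂‖ ≤ ‖y - c‖ + Z := by
    have := ntri y c q₂
    have h' : ‖c - q₂‖ = ‖q₂ - c‖ := norm_sub_rev _ _
    linarith [ntri y c q₂]
  have hzq2_lb : ‖z - c‖ - Z ≤ ‖z - q₂‖ := by
    have := ntri z q₂ c
    linarith
  have hzq2_ub : ‖z - q₂‖ ≤ ‖z - c‖ + Z := by
    have := ntri z c q₂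
    have h' : ‖c - q₂‖ = ‖q₂ - c‖ := norm_sub_rev _ _
    linarith
  have ht2 : ‖y - z‖^2 ≤ 10*‖z - c‖ + 15 := by
    have hb1 : ‖y - q₂‖ ≤ ‖z - c‖ + 4 := by linarith
    have hb2 : ‖z - c‖ - 1 ≤ ‖z - q₂‖ := by linarith
    have hb0 : (0:ℝ) ≤ ‖z - c‖ - 1 := by linarith
    have hb1' : ‖y - q₂‖^2 ≤ (‖z - c‖ + 4)^2 := by
      have := pow_le_pow_left₀ (norm_nonneg (y - q₂)) hb1 2
      exact this
    have hb2' : (‖z - c‖ - 1)^2 ≤ ‖z - q₂‖^2 := pow_le_pow_left₀ hb0 hb2 2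
    nlinarith [hsq, hb1', hb2']
  -- lower bound on ⟪v, y⟫
  have hfq₁ : |⟪v, q₁⟫ - α| ≤ Z := by
    have := inner_diff_le hv q₁ c
    rw [hcα] at this
    exact le_trans this hq₁c
  have hfq₂ : |⟪v, q₂⟫ - α| ≤ Z := by
    have := inner_diff_le hv q₂ c
    rw [hcα] at this
    exact le_trans this hq₂c
  have hyq1_le : ‖y - q₁‖ ≤ ‖x - c‖ + Z := by
    have h0 := proj_norm_sub_le hK₁ hproj₁ hq₁
    have := ntri x c q₁
    have h' : ‖c - q₁‖ = ‖q₁ - c‖ := norm_sub_rev _ _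
    linarith [ntri x c q₁]
  have hfy : α - 1 - Z - 2*Z*(‖z - c‖ + 2) ≤ ⟪v, y⟫ := by
    by_cases hs1 : ‖y - q₁‖ ≤ 1
    · have := (abs_le.mp (inner_diff_le hv y q₁)).1
      have h2 := (abs_le.mp hfq₁).1
      nlinarith [mul_nonneg (by positivity : (0:ℝ) ≤ 2*Z)
        (by positivity : (0:ℝ) ≤ ‖z - c‖ + 2)]
    · push_neg at hs1
      have hs0 : (0:ℝ) < ‖y - q₁‖ := by linarith
      set s : ℝ := ‖y - q₁‖ with hs
      set w' : X := q₁ + s⁻¹ • (y - q₁) with hw'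
      have hw'K : w' ∈ K₁ := convex_combo_mem hK₁ hq₁ hproj₁.1
        (by positivity) (by rw [inv_le_one_iff₀]; right; linarith)
      have hw'c : ‖w' - c‖ ≤ 2 := by
        have e : w' - c = (q₁ - c) + s⁻¹ • (y - q₁) := by rw [hw']; abel
        have h2 : ‖s⁻¹ • (y - q₁)‖ = 1 := by
          rw [norm_smul, Real.norm_eq_abs, abs_of_pos (by positivity), ← hs]
          field_simp
        calc ‖w' - c‖ ≤ ‖q₁ - c‖ + ‖s⁻¹ • (y - q₁)‖ := by rw [e]; exact norm_add_le _ _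
        _ ≤ Z + 1 := by rw [h2]; linarith
        _ ≤ 2 := by linarith
      obtain ⟨yb, hybB, hybd⟩ := (Metric.infDist_lt_iff hBne).mp (hAWB w' hw'K hw'c)
      have hfyb : α ≤ ⟪v, yb⟫ := hB_ge yb hybB
      have hfw' : α - Z ≤ ⟪v, w'⟫ := by
        have := (abs_le.mp (inner_diff_le hv w' yb)).1
        have h2 : ‖w' - yb‖ ≤ Z := by
          rw [← dist_eq_norm]
          exact le_of_lt hybd
        linarith
      have hcombo := inner_combo v q₁ y s⁻¹
      rw [← hw'] at hcombo
      have h3 : s * (⟪v, w'⟫ - ⟪v, q₁⟫) = ⟪v, y⟫ - ⟪v, q₁⟫ := by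
        rw [hcombo]
        field_simp
        ring
      have h4 : -(2*Z) ≤ ⟪v, w'⟫ - ⟪v, q₁⟫ := by
        have := (abs_le.mp hfq₁).2
        linarith
      have h5 : s * (-(2*Z)) ≤ s * (⟪v, w'⟫ - ⟪v, q₁⟫) :=
        mul_le_mul_of_nonneg_left h4 hs0.le
      have h6 : s ≤ ‖z - c‖ + 2 := by rw [hs]; linarith [hyq1_le]
      have h7 : s*(2*Z) ≤ (‖z - c‖ + 2)*(2*Z) :=
        mul_le_mul_of_nonneg_right h6 (by positivity)
      have h8 := (abs_le.mp hfq₁).1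
      nlinarith [h3, h5, h7]
  have hfz : α - 1 - Z - 2*Z*(‖z - c‖ + 2) - ‖y - z‖ ≤ ⟪v, z⟫ := by
    have := (abs_le.mp (inner_diff_le hv z y)).1
    have h' : ‖z - y‖ = ‖y - z‖ := norm_sub_rev _ _
    linarith
  -- the segment point
  set R : ℝ := ‖z - q₂‖ with hRdef
  have hR_lb : ‖z - c‖ - Z ≤ R := hzq2_lb
  have hR_ub : R ≤ ‖z - c‖ + Z := hzq2_ub
  have hR4 : (4:ℝ) < R := by linarith
  have hR0 : (0:ℝ) < R := by linarith
  set μ : ℝ := 4/R with hμ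
  have hμ0 : 0 < μ := by positivity
  have hμ1 : μ ≤ 1 := by rw [hμ, div_le_one hR0]; linarith
  set w : X := q₂ + μ • (z - q₂) with hw
  have hwK : w ∈ K₂ := convex_combo_mem hK₂ hq₂ hproj₂.1 hμ0.le hμ1
  have hμR : μ * R = 4 := by rw [hμ]; field_simp
  have hnw : ‖μ • (z - q₂)‖ = 4 := by
    rw [norm_smul, Real.norm_eq_abs, abs_of_pos hμ0, ← hRdef, hμR]
  have hwc_ub : ‖w - c‖ ≤ Z + 4 := by
    have e : w - c = (q₂ - c) + μ • (z - q₂) := by rw [hw]; abel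
    calc ‖w - c‖ ≤ ‖q₂ - c‖ + ‖μ • (z - q₂)‖ := by rw [e]; exact norm_add_le _ _
    _ ≤ Z + 4 := by rw [hnw]; linarith
  have hwc_lb : 4 - Z ≤ ‖w - c‖ := by
    have e : μ • (z - q₂) = (w - c) + (c - q₂) := by rw [hw]; abel
    have h2 : ‖μ • (z - q₂)‖ ≤ ‖w - c‖ + ‖c - q₂‖ := by rw [e]; exact norm_add_le _ _
    have h3 : ‖c - q₂‖ = ‖q₂ - c‖ := norm_sub_rev _ _
    rw [hnw] at h2
    linarith
  -- lower bound ⟪v, w⟫ ≥ α - θ/2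
  have hcombo2 := inner_combo v q₂ z μ
  rw [← hw] at hcombo2
  have hE : ⟪v, z⟫ - ⟪v, q₂⟫ ≥ -(1 + 2*Z + 2*Z*(‖z - c‖ + 2) + ‖y - z‖) := by
    have h7 := (abs_le.mp hfq₂).2
    linarith
  have h100t : 100 * ‖y - z‖ ≤ θ * R := by
    apply le_of_sq_le' (by positivity) (by positivity)
    have hzm1 : (0:ℝ) ≤ ‖z - c‖ - 1 := by linarith
    have hRlb' : ‖z - c‖ - 1 ≤ R := by linarith
    have k1 : (‖z - c‖ - 1)^2 ≤ R^2 := pow_le_pow_left₀ hzm1 hRlb' 2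
    have k1' : θ^2*(‖z - c‖ - 1)^2 ≤ θ^2*R^2 := mul_le_mul_of_nonneg_left k1 (sq_nonneg θ)
    have m1 : 1000000*‖z - c‖ ≤ (θ^2*‖z - c‖)*‖z - c‖ :=
      mul_le_mul_of_nonneg_right hθ2z (norm_nonneg _)
    have m2 : θ^2*‖z - c‖ ≤ ‖z - c‖ := by
      nlinarith only [mul_nonneg (by nlinarith only [hθ.le, hθ1] : (0:ℝ) ≤ 1 - θ^2)
        (norm_nonneg (z - c))]
    have e7 : θ^2*(‖z - c‖ - 1)^2 = (θ^2*‖z - c‖)*‖z - c‖ - 2*(θ^2*‖z - c‖) + θ^2 := by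
      ring
    rw [e7] at k1'
    have e8 : (100*‖y - z‖)^2 = 10000*‖y - z‖^2 := by ring
    have e9 : (θ*R)^2 = θ^2*R^2 := by ring
    rw [e8, e9]
    have a1 : 10000*‖y - z‖^2 ≤ 100000*‖z - c‖ + 150000 := by linarith only [ht2]
    linarith only [a1, k1', m1, m2, hzbig, sq_nonneg θ]
  have hμE : μ * (⟪v, z⟫ - ⟪v, q₂⟫) ≥ -(θ/4) := by
    have hE2 : μ * (⟪v, z⟫ - ⟪v, q₂⟫) ≥ μ * (-(1 + 2*Z + 2*Z*(‖z - c‖ + 2) + ‖y - z‖)) := by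
      rcases le_or_gt (-(1 + 2*Z + 2*Z*(‖z - c‖ + 2) + ‖y - z‖)) (⟪v, z⟫ - ⟪v, q₂⟫) with hd | hd
      · nlinarith [hμ0.le]
      · linarith [hE]
    have hZθ : Z = θ/512 := hZdef
    have h8 : (1000000:ℝ) ≤ θ * ‖z - c‖ := by
      have e1 : θ^2*‖z - c‖ ≤ θ*‖z - c‖ := by
        apply mul_le_mul_of_nonneg_right _ (norm_nonneg _)
        nlinarith only [hθ.le, hθ1]
      linarith only [e1, hθ2z]
    have h9 : θ * Z ≤ 1 := by rw [hZθ]; nlinarith only [hθ.le, hθ1]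
    have hθR : 999000 ≤ θ * R := by
      have h10 : θ*(‖z - c‖ - Z) ≤ θ*R := mul_le_mul_of_nonneg_left hR_lb hθ.le
      rw [mul_sub] at h10
      linarith only [h10, h8, h9]
    have hθz : θ * ‖z - c‖ ≤ θ * R + 1 := by
      have h10 : θ*‖z - c‖ ≤ θ*(R + Z) := by
        apply mul_le_mul_of_nonneg_left _ hθ.le
        linarith
      rw [mul_add] at h10
      linarith only [h10, h9]
    have key : μ * (1 + 2*Z + 2*Z*(‖z - c‖ + 2) + ‖y - z‖) ≤ θ/4 := by
      rw [hμ, div_mul_eq_mul_div, div_le_iff₀ hR0, hZθ]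
      have e10 : 4 * (1 + 2 * (θ / 512) + 2 * (θ / 512) * (‖z - c‖ + 2) + ‖y - z‖)
          = 4 + θ/64 + (θ*‖z - c‖)/64 + θ/32 + 4*‖y - z‖ := by ring
      rw [e10]
      linarith only [h100t, hθ1, hθ.le, hθR, hθz, norm_nonneg (y - z)]
    linarith [hE2, key]
  have hfw_lb : α - θ/2 ≤ ⟪v, w⟫ := by
    have h7 := (abs_le.mp hfq₂).1
    have hZθ : Z ≤ θ/2 := by rw [hZdef]; linarith
    rw [hcombo2]
    linarith [hμE]
  -- contradiction via the LUR slab property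
  obtain ⟨xa, hxaA, hxad⟩ := (Metric.infDist_lt_iff hAne).mp
    (hAWA w hwK (by linarith))
  have hxaw : ‖xa - w‖ ≤ Z := by
    have : dist w xa < Z := hxad
    rw [dist_eq_norm] at this
    have h' : ‖xa - w‖ = ‖w - xa‖ := norm_sub_rev _ _
    linarith
  have hfxa : α - θ ≤ ⟪v, xa⟫ := by
    have := (abs_le.mp (inner_diff_le hv xa w)).1
    have hZθ : Z ≤ θ/4 := by rw [hZdef]; linarith
    linarith [hfw_lb]
  have hlt := hL xa hxaA hfxa
  have hge : 2 ≤ ‖xa - c‖ := by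
    have := ntri w xa c
    have h' : ‖w - xa‖ = ‖xa - w‖ := norm_sub_rev _ _
    linarith [hwc_lb]
  linarith

end ND

section Case2
variable {X : Type*} [NormedAddCommGroup X] [InnerProductSpace ℝ X] [CompleteSpace X]
local notation "⟪" x ", " y "⟫" => @inner ℝ _ _ x y

private lemma sqrt_drop {A2 XX th M : ℝ} (hA2 : 0 ≤ A2) (hX : 0 ≤ XX) (hXM : XX ≤ M)
    (hsq : A2^2 ≤ XX^2 - th^2/8) (hth : 0 < th) :
    A2 ≤ XX - th^2/(32*(M+1)) := by
  have hM0 : 0 ≤ M := le_trans hX hXM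
  have h1 : A2 ≤ XX := le_of_sq_le' hA2 hX (by nlinarith only [hsq, hth])
  by_contra hcon
  push_neg at hcon
  have h2 : XX + A2 ≤ 2*(M+1) := by linarith
  have h4 : XX - A2 < th^2/(32*(M+1)) := by linarith
  have h6 : (XX - A2)*(XX + A2) ≤ (XX - A2)*(2*(M+1)) :=
    mul_le_mul_of_nonneg_left h2 (by linarith)
  have h7 : (XX - A2)*(2*(M+1)) < (th^2/(32*(M+1)))*(2*(M+1)) :=
    mul_lt_mul_of_pos_right h4 (by linarith)
  have h8 : (th^2/(32*(M+1)))*(2*(M+1)) = th^2/16 := by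
    field_simp
    ring
  nlinarith only [hsq, h6, h7, h8, hth]

set_option maxHeartbeats 2000000 in
private lemma case2_main (A B : Set X)
    (hAc : IsClosed A) (hAv : Convex ℝ A) (hAint : (interior A).Nonempty)
    (hBc : IsClosed B) (hBv : Convex ℝ B) (hBint : (interior B).Nonempty)
    (hAB : (A ∩ B).Nonempty)
    (hLUR : ∀ x ∈ frontier A, ∀ ε : ℝ, 0 < ε → ∃ δ : ℝ, 0 < δ ∧ ∀ y ∈ A,
      Metric.infDist ((2 : ℝ)⁻¹ • (x + y)) (frontier A) < δ → ‖x - y‖ < ε)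
    (An Bn : ℕ → Set X)
    (hAn : ∀ n, (An n).Nonempty ∧ IsClosed (An n) ∧ Convex ℝ (An n))
    (hBn : ∀ n, (Bn n).Nonempty ∧ IsClosed (Bn n) ∧ Convex ℝ (Bn n))
    (hAWa : AWTendsto An A) (hAWb : AWTendsto Bn B)
    (a b : ℕ → X)
    (hstep : ∀ n : ℕ, IsProjOn (Bn (n + 1)) (a n) (b (n + 1)) ∧
      IsProjOn (An (n + 1)) (b (n + 1)) (a (n + 1)))
    (hBiA : ¬(B ∩ interior A).Nonempty) :
    (∃ la : X, Filter.Tendsto a Filter.atTop (nhds la)) ∧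
      (∃ lb : X, Filter.Tendsto b Filter.atTop (nhds lb)) := by
  classical
  obtain ⟨c, hcA, hcB⟩ := hAB
  have hAne : A.Nonempty := ⟨c, hcA⟩
  have hBne : B.Nonempty := ⟨c, hcB⟩
  -- separation
  have hdisj : Disjoint (interior A) B := by
    rw [Set.disjoint_left]
    intro x hxint hxB
    exact hBiA ⟨x, hxB, hxint⟩
  obtain ⟨f₀, u₀, hf₁, hf₂⟩ :=
    geometric_hahn_banach_open (hAv.interior) isOpen_interior hBv hdisj
  set v₀ : X := (InnerProductSpace.toDual ℝ X).symm f₀ with hv₀def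
  have hv₀ : ∀ x : X, ⟪v₀, x⟫ = f₀ x := fun x => InnerProductSpace.toDual_symm_apply
  have hv₀ne : v₀ ≠ 0 := by
    intro h
    obtain ⟨ai, hai⟩ := hAint
    have h1 := hf₁ ai hai
    have h2 := hf₂ c hcB
    have e1 : f₀ ai = 0 := by rw [← hv₀, h, inner_zero_left]
    have e2 : f₀ c = 0 := by rw [← hv₀, h, inner_zero_left]
    rw [e1] at h1; rw [e2] at h2
    linarith
  set nv : ℝ := ‖v₀‖ with hnvdef
  have hnv : 0 < nv := by rw [hnvdef, norm_pos_iff]; exact hv₀ne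
  set v : X := nv⁻¹ • v₀ with hvdef
  have hv : ‖v‖ = 1 := by
    rw [hvdef, norm_smul, Real.norm_eq_abs, abs_of_pos (by positivity), ← hnvdef]
    field_simp
  have hvx : ∀ x : X, ⟪v, x⟫ = f₀ x / nv := by
    intro x
    rw [hvdef, real_inner_smul_left, hv₀, div_eq_inv_mul]
  set α : ℝ := u₀ / nv with hαdef
  have hintA_lt : ∀ x ∈ interior A, ⟪v, x⟫ < α := by
    intro x hx
    rw [hvx, hαdef]
    exact div_lt_div_of_pos_right (hf₁ x hx) hnv
  have hB_ge : ∀ y ∈ B, α ≤ ⟪v, y⟫ := by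
    intro y hy
    rw [hvx, hαdef]
    gcongr
    exact hf₂ y hy
  -- A lies below the hyperplane
  have hA_le : ∀ x ∈ A, ⟪v, x⟫ ≤ α := by
    intro x hx
    by_contra hgt
    push_neg at hgt
    obtain ⟨zi, hzi⟩ := hAint
    set ee : ℝ := ⟪v, x⟫ - α with hee
    have hee0 : 0 < ee := by rw [hee]; linarith
    set D : ℝ := ⟪v, zi⟫ - ⟪v, x⟫ with hD
    set μ : ℝ := min 1 (ee/(|D| + ee)) with hμ
    have hden : 0 < |D| + ee := by positivity
    have hμ0 : 0 < μ := lt_min one_pos (by positivity)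
    have hμ1 : μ ≤ 1 := min_le_left _ _
    have hmem := hAv.add_smul_sub_mem_interior hx hzi ⟨hμ0, hμ1⟩
    have hlt := hintA_lt _ hmem
    rw [inner_combo] at hlt
    have k1 : μ ≤ ee/(|D| + ee) := min_le_right _ _
    have k2 : μ*|D| ≤ (ee/(|D| + ee))*|D| := mul_le_mul_of_nonneg_right k1 (abs_nonneg D)
    have k3 : (ee/(|D| + ee))*|D| < ee := by
      rw [div_mul_eq_mul_div, div_lt_iff₀ hden]
      nlinarith only [abs_nonneg D, hee0]
    have k4 : μ*(-|D|) ≤ μ*D := mul_le_mul_of_nonneg_left (neg_abs_le D) hμ0.le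
    rw [← hD] at hlt
    nlinarith only [hlt, k2, k3, k4, hee0]
  have hcα : ⟪v, c⟫ = α := le_antisymm (hA_le c hcA) (hB_ge c hcB)
  have hcfront : c ∈ frontier A := by
    rw [hAc.frontier_eq]
    exact ⟨hcA, fun hint => hBiA ⟨c, hcB, hint⟩⟩
  -- distances to B from below the hyperplane
  have hdistB : ∀ x : X, α - ⟪v, x⟫ ≤ Metric.infDist x B := by
    intro x
    rcases le_or_gt (α - ⟪v, x⟫) 0 with h | h
    · exact le_trans h Metric.infDist_nonneg
    · by_contra hcon
      push_neg at hcon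
      obtain ⟨yb, hybB, hybd⟩ := (Metric.infDist_lt_iff hBne).mp hcon
      have h1 := hB_ge yb hybB
      have h2 := (abs_le.mp (inner_diff_le hv yb x)).2
      have h3 : ‖yb - x‖ = dist x yb := by rw [dist_eq_norm, norm_sub_rev]
      rw [h3] at h2
      linarith
  -- the LUR slab property
  have hL1 : ∀ ε : ℝ, 0 < ε → ∃ θ : ℝ, 0 < θ ∧ θ ≤ 1 ∧
      ∀ x ∈ A, α - θ ≤ ⟪v, x⟫ → ‖x - c‖ < ε := by
    intro ε hε
    obtain ⟨δ, hδ, hlur⟩ := hLUR c hcfront ε hε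
    refine ⟨min δ 1, lt_min hδ one_pos, min_le_right _ _, ?_⟩
    intro x hx hfx
    have hmidA : (2:ℝ)⁻¹ • (c + x) ∈ A := by
      have h2 := hAv hcA hx (by norm_num : (0:ℝ) ≤ 2⁻¹) (by norm_num : (0:ℝ) ≤ 2⁻¹)
        (by norm_num)
      have e : (2:ℝ)⁻¹ • (c + x) = (2:ℝ)⁻¹ • c + (2:ℝ)⁻¹ • x := smul_add _ _ _
      rwa [e]
    have hfmid : ⟪v, (2:ℝ)⁻¹ • (c + x)⟫ = 2⁻¹*(α + ⟪v, x⟫) := by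
      rw [real_inner_smul_right, inner_add_right, hcα]
    have hfd := frontier_dist_le hAc hv hA_le hmidA
    rw [hfmid] at hfd
    have hmin1 : min δ 1 ≤ δ := min_le_left _ _
    have hmin0 : 0 < min δ 1 := lt_min hδ one_pos
    have := hlur x hx (by nlinarith only [hfd, hfx, hmin1, hmin0, hδ])
    rwa [norm_sub_rev] at this
  obtain ⟨θ, hθ0, hθ1, hL⟩ := hL1 1 one_pos
  set Z : ℝ := θ/512 with hZdef
  have hZ0 : 0 < Z := by rw [hZdef]; positivity
  have hZ1 : Z ≤ 1 := by rw [hZdef]; linarith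
  -- thresholds for the non-drop lemma
  obtain ⟨N1, hN1⟩ := hAWa.spec (‖c‖ + 6) Z hZ0
  obtain ⟨N2, hN2⟩ := hAWb.spec (‖c‖ + 6) Z hZ0
  set N₂ : ℕ := max N1 N2 with hN₂def
  -- c-proximity to the sets
  have hcAn : ∀ n, N₂ ≤ n → Metric.infDist c (An n) < Z := by
    intro n hn
    have h := hN1 n (le_trans (le_max_left _ _) hn) c (by linarith [norm_nonneg c])
    rw [Metric.infDist_zero_of_mem hcA, sub_zero] at h
    have h2 := (abs_lt.mp h).2
    linarith
  have hcBn : ∀ n, N₂ ≤ n → Metric.infDist c (Bn n) < Z := by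
    intro n hn
    have h := hN2 n (le_trans (le_max_right _ _) hn) c (by linarith [norm_nonneg c])
    rw [Metric.infDist_zero_of_mem hcB, sub_zero] at h
    have h2 := (abs_lt.mp h).2
    linarith
  -- no large non-drop step
  have hND : ∀ m, N₂ ≤ m → 1000000/θ^2 ≤ ‖a (m+1) - c‖ →
      ‖a (m+1) - c‖ < ‖a m - c‖ - 1 := by
    intro m hm hR
    by_contra hnd
    push_neg at hnd
    obtain ⟨q₁, hq₁, hq₁d⟩ := (Metric.infDist_lt_iff (hBn (m+1)).1).mp
      (hcBn (m+1) (by omega))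
    obtain ⟨q₂, hq₂, hq₂d⟩ := (Metric.infDist_lt_iff (hAn (m+1)).1).mp
      (hcAn (m+1) (by omega))
    have hq₁c : ‖q₁ - c‖ ≤ Z := by
      rw [← dist_eq_norm, dist_comm]
      exact hq₁d.le
    have hq₂c : ‖q₂ - c‖ ≤ Z := by
      rw [← dist_eq_norm, dist_comm]
      exact hq₂d.le
    have hAWA' : ∀ w' ∈ An (m+1), ‖w' - c‖ ≤ 6 → Metric.infDist w' A < Z := by
      intro w' hw' hwc
      have hnorm : ‖w'‖ ≤ ‖c‖ + 6 := by
        have := ntri w' c 0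
        simp only [sub_zero] at this
        have h2 : ‖c - 0‖ = ‖c‖ := by simp
        calc ‖w'‖ = ‖w' - 0‖ := by simp
        _ ≤ ‖w' - c‖ + ‖c - 0‖ := ntri w' c 0
        _ ≤ 6 + ‖c‖ := by rw [h2]; linarith
        _ = ‖c‖ + 6 := by ring
      have h := hN1 (m+1) (le_trans (le_max_left _ _) (by omega : N₂ ≤ m + 1)) w' hnorm
      rw [Metric.infDist_zero_of_mem hw', zero_sub, abs_neg,
        abs_of_nonneg Metric.infDist_nonneg] at h
      exact h
    have hAWB' : ∀ w' ∈ Bn (m+1), ‖w' - c‖ ≤ 2 → Metric.infDist w' B < Z := by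
      intro w' hw' hwc
      have hnorm : ‖w'‖ ≤ ‖c‖ + 6 := by
        have h2 : ‖c - 0‖ = ‖c‖ := by simp
        calc ‖w'‖ = ‖w' - 0‖ := by simp
        _ ≤ ‖w' - c‖ + ‖c - 0‖ := ntri w' c 0
        _ ≤ 2 + ‖c‖ := by rw [h2]; linarith
        _ ≤ ‖c‖ + 6 := by linarith
      have h := hN2 (m+1) (le_trans (le_max_right _ _) (by omega : N₂ ≤ m + 1)) w' hnorm
      rw [Metric.infDist_zero_of_mem hw', zero_sub, abs_neg,
        abs_of_nonneg Metric.infDist_nonneg] at h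
      exact h
    exact nd_core (hBn (m+1)).2.2 (hAn (m+1)).2.2 hAne hBne hv hθ0 hθ1 hL hcα hB_ge
      (hstep m).1 (hstep m).2 hq₁ hq₂ hZdef hq₁c hq₂c hAWA' hAWB' hnd hR
  -- boundedness
  set R₀ : ℝ := 1000000/θ^2 with hR₀def
  have hR₀pos : 0 < R₀ := by rw [hR₀def]; positivity
  have hQ : ∀ n, N₂ + 1 ≤ n → (R₀ ≤ ‖a n - c‖ →
      ‖a n - c‖ + ((n:ℝ) - ((N₂:ℝ)+1)) ≤ ‖a (N₂+1) - c‖) := by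
    intro n hn
    induction n, hn using Nat.le_induction with
    | base =>
      intro _
      push_cast
      simp
    | succ n hn ih =>
      intro hR
      have hd := hND n (by omega) hR
      have hR' : R₀ ≤ ‖a n - c‖ := by linarith
      have h2 := ih hR'
      push_cast
      push_cast at h2
      linarith
  set M : ℝ := R₀ + ‖a (N₂+1) - c‖ + 1 with hMdef
  have hM0 : 0 < M := by
    rw [hMdef]
    have := norm_nonneg (a (N₂+1) - c)
    linarith
  have hbdd : ∀ n, N₂ + 1 ≤ n → ‖a n - c‖ ≤ M := by
    intro n hn
    rcases le_or_gt (‖a n - c‖) R₀ with h | h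
    · rw [hMdef]; linarith [norm_nonneg (a (N₂+1) - c)]
    · have h2 := hQ n hn h.le
      have h3 : (0:ℝ) ≤ (n:ℝ) - ((N₂:ℝ)+1) := by
        have : ((N₂:ℝ)+1) ≤ (n:ℝ) := by exact_mod_cast hn
        linarith
      rw [hMdef]
      linarith
  -- main convergence estimate
  have hconv : ∀ ε : ℝ, 0 < ε → ε ≤ 1 → ∃ N₆, ∀ n, N₆ ≤ n →
      ‖a n - c‖ ≤ 2*ε ∧ ‖b (n+1) - c‖ ≤ 3*ε := by
    intro ε hε hε1
    obtain ⟨θ₂, hθ₂0, hθ₂1, hL2⟩ := hL1 (ε/2) (by positivity)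
    set σ : ℝ := θ₂^2/(32*(M+1)) with hσdef
    have hσ0 : 0 < σ := by rw [hσdef]; positivity
    set ζ : ℝ := min (ε/4) (min (θ₂/8) (θ₂^2/(64*(M+2)))) with hζdef
    have hζ0 : 0 < ζ := by
      rw [hζdef]
      refine lt_min (by positivity) (lt_min (by positivity) (by positivity))
    have hζε : ζ ≤ ε/4 := min_le_left _ _
    have hζθ : ζ ≤ θ₂/8 := le_trans (min_le_right _ _) (min_le_left _ _)
    have hζM : ζ ≤ θ₂^2/(64*(M+2)) := le_trans (min_le_right _ _) (min_le_right _ _)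
    have hζ1 : ζ ≤ 1 := by
      have : ε/4 ≤ 1 := by linarith
      linarith [hζε]
    obtain ⟨N3, hN3⟩ := hAWa.spec (‖c‖ + M + 1) ζ hζ0
    obtain ⟨N4, hN4⟩ := hAWb.spec (‖c‖ + M + 1) ζ hζ0
    set N₅ : ℕ := max (max N3 N4) (N₂+1) with hN₅def
    have hN₅N₂ : N₂ + 1 ≤ N₅ := le_max_right _ _
    have hN₅3 : N3 ≤ N₅ := le_trans (le_max_left _ _) (le_max_left _ _)
    have hN₅4 : N4 ≤ N₅ := le_trans (le_max_right _ _) (le_max_left _ _)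
    -- near points in the moving sets
    have hqB : ∀ n, N₅ ≤ n → ∃ q ∈ Bn (n+1), ‖q - c‖ ≤ ζ := by
      intro n hn
      have h := hN4 (n+1) (by omega) c (by linarith [norm_nonneg c])
      rw [Metric.infDist_zero_of_mem hcB, sub_zero] at h
      have h2 := (abs_lt.mp h).2
      obtain ⟨q, hq, hqd⟩ := (Metric.infDist_lt_iff (hBn (n+1)).1).mp h2
      exact ⟨q, hq, by rw [← dist_eq_norm, dist_comm]; exact hqd.le⟩
    have hqA : ∀ n, N₅ ≤ n → ∃ q ∈ An (n+1), ‖q - c‖ ≤ ζ := by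
      intro n hn
      have h := hN3 (n+1) (by omega) c (by linarith [norm_nonneg c])
      rw [Metric.infDist_zero_of_mem hcA, sub_zero] at h
      have h2 := (abs_lt.mp h).2
      obtain ⟨q, hq, hqd⟩ := (Metric.infDist_lt_iff (hAn (n+1)).1).mp h2
      exact ⟨q, hq, by rw [← dist_eq_norm, dist_comm]; exact hqd.le⟩
    -- growth step
    have hgrow : ∀ m, N₅ ≤ m → ‖a (m+2) - c‖ ≤ ‖a (m+1) - c‖ + 4*ζ := by
      intro m hm
      obtain ⟨qB, hqBm, hqBc⟩ := hqB (m+1) (by omega)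
      obtain ⟨qA, hqAm, hqAc⟩ := hqA (m+1) (by omega)
      have h1 := step_norm_le (hBn (m+2)).2.2 (hstep (m+1)).1 hqBm hqBc
      have h2 := step_norm_le (hAn (m+2)).2.2 (hstep (m+1)).2 hqAm hqAc
      linarith
    -- decrease step
    have hdec : ∀ m, N₅ ≤ m → ε ≤ ‖a (m+1) - c‖ → ‖a (m+1) - c‖ ≤ M →
        ‖a (m+2) - c‖ ≤ ‖a (m+1) - c‖ - σ := by
      intro m hm hLe hUe
      set x : X := a (m+1) with hxdef
      -- x is near A
      have hxAn : x ∈ An (m+1) := (hstep m).2.1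
      have hxnorm : ‖x‖ ≤ ‖c‖ + M + 1 := by
        calc ‖x‖ = ‖x - 0‖ := by simp
        _ ≤ ‖x - c‖ + ‖c - 0‖ := ntri x c 0
        _ ≤ M + ‖c‖ := by
            have : ‖c - 0‖ = ‖c‖ := by simp
            rw [this]
            linarith
        _ ≤ ‖c‖ + M + 1 := by linarith
      have hxA : Metric.infDist x A < ζ := by
        have h := hN3 (m+1) (by omega) x hxnorm
        rw [Metric.infDist_zero_of_mem hxAn, zero_sub, abs_neg,
          abs_of_nonneg Metric.infDist_nonneg] at h
        exact h
      obtain ⟨xa, hxaA, hxad⟩ := (Metric.infDist_lt_iff hAne).mp hxA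
      have hxxa : ‖x - xa‖ ≤ ζ := by
        rw [← dist_eq_norm]
        exact hxad.le
      have hxac : ε/2 ≤ ‖xa - c‖ := by
        have := ntri x xa c
        linarith
      -- xa is deep below the hyperplane
      have hfxa : ⟪v, xa⟫ < α - θ₂ := by
        by_contra hcon
        push_neg at hcon
        exact absurd (hL2 xa hxaA hcon) (by linarith)
      have hfx : ⟪v, x⟫ < α - θ₂ + ζ := by
        have h2 := (abs_le.mp (inner_diff_le hv x xa)).2
        linarith
      -- x is far from Bn (m+2)
      have hxB : θ₂ - ζ ≤ Metric.infDist x B := by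
        have := hdistB x
        linarith
      have hxBn : θ₂/2 ≤ Metric.infDist x (Bn (m+2)) := by
        have h := hN4 (m+2) (by omega) x hxnorm
        have h2 := (abs_lt.mp h).1
        linarith
      have hu : θ₂/2 ≤ ‖x - b (m+2)‖ := by
        have h := Metric.infDist_le_dist_of_mem (x := x) (hstep (m+1)).1.1
        rw [dist_eq_norm] at h
        exact le_trans hxBn h
      -- quantitative Fejér steps
      obtain ⟨qB, hqBm, hqBc⟩ := hqB (m+1) (by omega)
      obtain ⟨qA, hqAm, hqAc⟩ := hqA (m+1) (by omega)
      have hs1 := step_sq_le (hBn (m+2)).2.2 (hstep (m+1)).1 hqBm hqBc hζ0.le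
      have hs2 := step_sq_le (hAn (m+2)).2.2 (hstep (m+1)).2 hqAm hqAc hζ0.le
      have hbc : ‖b (m+2) - c‖ ≤ ‖x - c‖ + 2*ζ :=
        step_norm_le (hBn (m+2)).2.2 (hstep (m+1)).1 hqBm hqBc
      have hbc' : ‖b (m+2) - c‖ ≤ M + 2 := by linarith
      -- combine
      have hsq2 : ‖a (m+2) - c‖^2 ≤ ‖x - c‖^2 - θ₂^2/8 := by
        have hu2 : (θ₂/2)^2 ≤ ‖x - b (m+2)‖^2 :=
          pow_le_pow_left₀ (by positivity) hu 2
        have hζM2 : ζ*(64*(M+2)) ≤ θ₂^2 := by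
          have h := mul_le_mul_of_nonneg_right hζM
            (by positivity : (0:ℝ) ≤ 64*(M+2))
          rwa [div_mul_cancel₀ _ (by positivity : (64*(M+2):ℝ) ≠ 0)] at h
        nlinarith only [hs1, hs2, hu2, hbc, hbc', hζ0.le, hζM2, hUe, hM0,
          sq_nonneg ‖b (m+2) - a (m+2)‖, norm_nonneg (x - c), hζ1]
      exact sqrt_drop (norm_nonneg _) (norm_nonneg _) hUe hsq2 hθ₂0
    -- descent to a small ball
    have hex : ∃ m₀, N₅ ≤ m₀ ∧ ‖a (m₀+1) - c‖ < ε := by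
      by_contra hcon
      push_neg at hcon
      have hiter : ∀ j : ℕ, ‖a (N₅ + j + 1) - c‖ ≤ ‖a (N₅+1) - c‖ - j*σ := by
        intro j
        induction j with
        | zero => simp
        | succ j ih =>
          have hj := hcon (N₅ + j) (by omega)
          have hMj : ‖a (N₅ + j + 1) - c‖ ≤ M := hbdd _ (by omega)
          have hd := hdec (N₅ + j) (by omega) hj hMj
          have e : N₅ + (j+1) + 1 = (N₅ + j) + 2 := by omega
          rw [e]
          push_cast
          push_cast at ih
          linarith
      set j : ℕ := ⌈(M+1)/σ⌉₊ with hjdef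
      have hjσ : M + 1 ≤ (j:ℝ)*σ := by
        have h1 : (M+1)/σ ≤ (j:ℝ) := Nat.le_ceil _
        have h2 := mul_le_mul_of_nonneg_right h1 hσ0.le
        rw [div_mul_cancel₀] at h2
        · exact h2
        · exact hσ0.ne'
      have h3 := hiter j
      have h4 : ‖a (N₅+1) - c‖ ≤ M := hbdd _ (by omega)
      have h5 := norm_nonneg (a (N₅ + j + 1) - c)
      linarith
    obtain ⟨m₀, hm₀N, hm₀⟩ := hex
    -- invariance
    have hinv : ∀ n, m₀ + 1 ≤ n → ‖a n - c‖ ≤ 2*ε := by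
      intro n hn
      induction n, hn using Nat.le_induction with
      | base => linarith
      | succ n hn ih =>
        obtain ⟨m, rfl⟩ : ∃ m, n = m + 1 := ⟨n - 1, by omega⟩
        rcases lt_or_ge (‖a (m+1) - c‖) ε with h | h
        · have := hgrow m (by omega)
          linarith
        · have hM2 : ‖a (m+1) - c‖ ≤ M := hbdd _ (by omega)
          have := hdec m (by omega) h hM2
          linarith
    refine ⟨m₀ + 1, fun n hn => ⟨hinv n hn, ?_⟩⟩
    obtain ⟨qB, hqBm, hqBc⟩ := hqB n (by omega)
    have h1 := step_norm_le (hBn (n+1)).2.2 (hstep n).1 hqBm hqBc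
    have h2 := hinv n hn
    linarith
  -- conclude
  constructor
  · refine ⟨c, ?_⟩
    rw [Metric.tendsto_atTop]
    intro ε' hε'
    set ε : ℝ := min ε' 1 / 3 with hεdef
    have hε0 : 0 < ε := by
      rw [hεdef]
      have : 0 < min ε' 1 := lt_min hε' one_pos
      positivity
    have hε1 : ε ≤ 1 := by
      rw [hεdef]
      have : min ε' 1 ≤ 1 := min_le_right _ _
      linarith
    obtain ⟨N₆, hN₆⟩ := hconv ε hε0 hε1
    refine ⟨N₆, fun n hn => ?_⟩
    have h := (hN₆ n hn).1
    rw [dist_eq_norm]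
    have h2 : 2*ε < ε' := by
      rw [hεdef]
      have h3 : min ε' 1 ≤ ε' := min_le_left _ _
      have : 0 < min ε' 1 := lt_min hε' one_pos
      linarith
    linarith
  · refine ⟨c, ?_⟩
    rw [Metric.tendsto_atTop]
    intro ε' hε'
    set ε : ℝ := min ε' 1 / 4 with hεdef
    have hε0 : 0 < ε := by
      rw [hεdef]
      have : 0 < min ε' 1 := lt_min hε' one_pos
      positivity
    have hε1 : ε ≤ 1 := by
      rw [hεdef]
      have : min ε' 1 ≤ 1 := min_le_right _ _
      linarith
    obtain ⟨N₆, hN₆⟩ := hconv ε hε0 hε1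
    refine ⟨N₆ + 1, fun k hk => ?_⟩
    obtain ⟨n, rfl⟩ : ∃ n, k = n + 1 := ⟨k - 1, by omega⟩
    have h := (hN₆ n (by omega)).2
    rw [dist_eq_norm]
    have h2 : 3*ε < ε' := by
      rw [hεdef]
      have h3 : min ε' 1 ≤ ε' := min_le_left _ _
      have : 0 < min ε' 1 := lt_min hε' one_pos
      linarith
    linarith

end Case2

section Case1
variable {X : Type*} [NormedAddCommGroup X] [InnerProductSpace ℝ X] [CompleteSpace X]

private lemma case1_main (A B : Set X)
    (hAc : IsClosed A) (hAv : Convex ℝ A) (hAint : (interior A).Nonempty)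
    (hBc : IsClosed B) (hBv : Convex ℝ B) (hBint : (interior B).Nonempty)
    (hAB : (A ∩ B).Nonempty)
    (An Bn : ℕ → Set X)
    (hAn : ∀ n, (An n).Nonempty ∧ IsClosed (An n) ∧ Convex ℝ (An n))
    (hBn : ∀ n, (Bn n).Nonempty ∧ IsClosed (Bn n) ∧ Convex ℝ (Bn n))
    (hAWa : AWTendsto An A) (hAWb : AWTendsto Bn B)
    (a b : ℕ → X)
    (hstep : ∀ n : ℕ, IsProjOn (Bn (n + 1)) (a n) (b (n + 1)) ∧
      IsProjOn (An (n + 1)) (b (n + 1)) (a (n + 1)))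
    (hBiA : (B ∩ interior A).Nonempty) :
    (∃ la : X, Filter.Tendsto a Filter.atTop (nhds la)) ∧
      (∃ lb : X, Filter.Tendsto b Filter.atTop (nhds lb)) := by
  obtain ⟨c₁, hc₁B, hc₁A⟩ := hBiA
  obtain ⟨z, hz⟩ := hBint
  obtain ⟨rA, hrA, hballA⟩ := Metric.isOpen_iff.mp isOpen_interior c₁ hc₁A
  set lam : ℝ := min 1 (rA / (‖z - c₁‖ + 1)) with hlamdef
  have hpos' : (0:ℝ) < rA / (‖z - c₁‖ + 1) := by positivity
  have hlam0 : 0 < lam := lt_min one_pos hpos'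
  have hlam1 : lam ≤ 1 := min_le_left _ _
  set w : X := c₁ + lam • (z - c₁) with hwdef
  have hwB : w ∈ interior B := hBv.add_smul_sub_mem_interior hc₁B hz ⟨hlam0, hlam1⟩
  have hwA : w ∈ interior A := by
    apply hballA
    rw [Metric.mem_ball, dist_eq_norm]
    have e : w - c₁ = lam • (z - c₁) := by rw [hwdef]; abel
    rw [e, norm_smul, Real.norm_eq_abs, abs_of_pos hlam0]
    have h1 : lam ≤ rA / (‖z - c₁‖ + 1) := min_le_right _ _
    have h2 : lam * ‖z - c₁‖ ≤ rA / (‖z - c₁‖ + 1) * ‖z - c₁‖ :=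
      mul_le_mul_of_nonneg_right h1 (norm_nonneg _)
    have h3 : rA / (‖z - c₁‖ + 1) * ‖z - c₁‖ < rA := by
      rw [div_mul_eq_mul_div, div_lt_iff₀ (by positivity)]
      nlinarith [norm_nonneg (z - c₁)]
    linarith
  obtain ⟨rA', hrA', hbA'⟩ := Metric.isOpen_iff.mp isOpen_interior w hwA
  obtain ⟨rB', hrB', hbB'⟩ := Metric.isOpen_iff.mp isOpen_interior w hwB
  set ρ : ℝ := min rA' rB' / 4 with hρdef
  have hρ : 0 < ρ := by
    rw [hρdef]
    have := lt_min hrA' hrB'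
    positivity
  have hsubA : Metric.closedBall w (2*ρ) ⊆ A := by
    intro x hx
    apply interior_subset
    apply hbA'
    rw [Metric.mem_ball]
    rw [Metric.mem_closedBall] at hx
    have h1 : min rA' rB' ≤ rA' := min_le_left _ _
    have h2 : 0 < min rA' rB' := lt_min hrA' hrB'
    calc dist x w ≤ 2*ρ := hx
    _ < rA' := by rw [hρdef]; linarith
  have hsubB : Metric.closedBall w (2*ρ) ⊆ B := by
    intro x hx
    apply interior_subset
    apply hbB'
    rw [Metric.mem_ball]
    rw [Metric.mem_closedBall] at hx
    have h1 : min rA' rB' ≤ rB' := min_le_right _ _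
    have h2 : 0 < min rA' rB' := lt_min hrA' hrB'
    calc dist x w ≤ 2*ρ := hx
    _ < rB' := by rw [hρdef]; linarith
  obtain ⟨NA, hNA⟩ := aw_closedBall_subset hAWa hAn hρ hsubA
  obtain ⟨NB, hNB⟩ := aw_closedBall_subset hAWb hBn hρ hsubB
  set N : ℕ := max NA NB with hN
  set G : ℕ → ℝ := fun n => dist (a n) (b (n+1)) + dist (b (n+1)) (a (n+1)) with hG
  have hG0 : ∀ n, 0 ≤ G n := fun n => add_nonneg dist_nonneg dist_nonneg
  set φ : ℕ → ℝ := fun n => ‖a n - w‖^2 / (2*ρ) with hφ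
  have hφ0 : ∀ n, 0 ≤ φ n := fun n => div_nonneg (sq_nonneg _) (by positivity)
  have hdec : ∀ n, N ≤ n → G n ≤ φ n - φ (n+1) := by
    intro n hn
    have hb := (hstep n).1.sq_dist_ball (hBn (n+1)).2.2 hρ.le
      (hNB (n+1) (by omega))
    have ha := (hstep n).2.sq_dist_ball (hAn (n+1)).2.2 hρ.le
      (hNA (n+1) (by omega))
    rw [hG, hφ]
    simp only
    rw [dist_eq_norm, dist_eq_norm, ← sub_div, le_div_iff₀ (by positivity : (0:ℝ) < 2*ρ)]
    nlinarith [sq_nonneg ‖a n - b (n+1)‖, sq_nonneg ‖b (n+1) - a (n+1)‖]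
  set C : ℝ := (∑ k ∈ Finset.range N, G k) + φ N with hC
  have hind : ∀ j, ∑ k ∈ Finset.range (N+j), G k ≤
      (∑ k ∈ Finset.range N, G k) + (φ N - φ (N+j)) := by
    intro j
    induction j with
    | zero => simp
    | succ j ih =>
      rw [show N + (j+1) = (N+j) + 1 by ring, Finset.sum_range_succ]
      have := hdec (N+j) (by omega)
      linarith
  have hpart : ∀ m, ∑ k ∈ Finset.range m, G k ≤ C := by
    intro m
    rcases le_or_gt m N with hm | hm
    · have hsub : ∑ k ∈ Finset.range m, G k ≤ ∑ k ∈ Finset.range N, G k :=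
        Finset.sum_le_sum_of_subset_of_nonneg (Finset.range_subset_range.mpr hm)
          (fun i _ _ => hG0 i)
      have := hφ0 N
      rw [hC]
      linarith
    · obtain ⟨j, rfl⟩ : ∃ j, m = N + j := ⟨m - N, by omega⟩
      have := hind j
      have := hφ0 (N + j)
      rw [hC]
      linarith
  have hsummable : Summable G := summable_of_sum_range_le hG0 hpart
  have hda : ∀ n, dist (a n) (a (n+1)) ≤ G n := fun n => dist_triangle _ _ _
  have hacauchy : CauchySeq a :=
    cauchySeq_of_summable_dist (hsummable.of_nonneg_of_le (fun n => dist_nonneg) hda)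
  obtain ⟨la, hla⟩ := cauchySeq_tendsto_of_complete hacauchy
  have hG_to0 : Tendsto G atTop (nhds 0) := hsummable.tendsto_atTop_zero
  have hb_shift : Tendsto (fun n => b (n+1)) atTop (nhds la) := by
    apply tendsto_iff_dist_tendsto_zero.mpr
    have h1 : Tendsto (fun n => dist (a (n+1)) la) atTop (nhds 0) :=
      tendsto_iff_dist_tendsto_zero.mp ((tendsto_add_atTop_iff_nat 1).2 hla)
    apply squeeze_zero (g := fun n => G n + dist (a (n+1)) la) (fun n => dist_nonneg) ?_ ?_
    · intro n
      calc dist (b (n+1)) la ≤ dist (b (n+1)) (a (n+1)) + dist (a (n+1)) la :=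
            dist_triangle _ _ _
      _ ≤ G n + dist (a (n+1)) la := by
          have : (0:ℝ) ≤ dist (a n) (b (n+1)) := dist_nonneg
          rw [hG]; simp only; linarith
    · have := hG_to0.add h1
      simpa using this
  exact ⟨⟨la, hla⟩, ⟨la, (tendsto_add_atTop_iff_nat 1).mp hb_shift⟩⟩

end Case1

theorem stmt4 {X : Type*} [NormedAddCommGroup X] [InnerProductSpace ℝ X] [CompleteSpace X]
    (A B : Set X)
    (hAc : IsClosed A) (hAv : Convex ℝ A) (hAint : (interior A).Nonempty)
    (hBc : IsClosed B) (hBv : Convex ℝ B) (hBint : (interior B).Nonempty)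
    (hAB : (A ∩ B).Nonempty)
    (hLUR : ∀ x ∈ frontier A, IsLURPoint A x) :
    StablePair A B := by
  intro An Bn hAn hBn hAWa hAWb a₀ a b hab
  obtain ⟨hA0, hstep⟩ := hab
  by_cases hBiA : (B ∩ interior A).Nonempty
  · exact case1_main A B hAc hAv hAint hBc hBv hBint hAB An Bn hAn hBn hAWa hAWb
      a b hstep hBiA
  · exact case2_main A B hAc hAv hAint hBc hBv hBint hAB
      (fun x hx => hLUR x hx) An Bn hAn hBn hAWa hAWb a b hstep hBiA
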